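/- arXiv:1808.01581 — 5 statements merged into one kernel-verified Lean document; each statement's English description precedes it below -/
import Mathlib

section
/- Let n ≥ 2, p > 1, and suppose v ∈ C^2([0,∞)) satisfies v(r) ≥ c r² for all r ≥ r₀ (for some c > 0, r₀ > 0), and w ∈ C^2([0,∞)) satisfies -(1/r^{n-1})(r^{n-1} w'(r))' ≥ C₁ r^{-a} v(r)^p for all r > 0, where 0 ≤ a ≤ 2 + 2p and C₁ > 0. If additionally r^{n-1} w'(r) → 0 as r → 0, then w(r) → -∞ as r → ∞. In particular w cannot be nonnegative on [0,∞). -/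
open Filter Set Topology

lemma antiHelper {f g g' : ℝ → ℝ} {R : ℝ}
    (hfc : ContinuousOn f (Ici R)) (hgc : ContinuousOn g (Ici R))
    (hfd : ∀ x ∈ Ioi R, DifferentiableAt ℝ f x)
    (hgd : ∀ x ∈ Ioi R, HasDerivAt g (g' x) x)
    (hle : ∀ x ∈ Ioi R, deriv f x + g' x ≤ 0) :
    ∀ x ∈ Ici R, f x + g x ≤ f R + g R := by
  have H : AntitoneOn (fun x => f x + g x) (Ici R) := by
    apply antitoneOn_of_deriv_nonpos (convex_Ici R) (hfc.add hgc)
    · rw [interior_Ici]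
      exact fun x hx => ((hfd x hx).add (hgd x hx).differentiableAt).differentiableWithinAt
    · rw [interior_Ici]; intro x hx
      rw [deriv_add (hfd x hx) (hgd x hx).differentiableAt, (hgd x hx).deriv]
      exact hle x hx
  exact fun x hx => H self_mem_Ici hx hx

theorem radial_double_integration_divergence
    (n : ℕ) (hn : 2 ≤ n) (p a c C₁ r₀ : ℝ) (hp : 1 < p) (hc : 0 < c) (hr₀ : 0 < r₀)
    (ha0 : 0 ≤ a) (ha1 : a ≤ 2 + 2 * p) (hC₁ : 0 < C₁)
    (v w : ℝ → ℝ)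
    (hv : ContDiffOn ℝ 2 v (Ici 0)) (hw : ContDiffOn ℝ 2 w (Ici 0))
    (hvlb : ∀ r ≥ r₀, c * r ^ 2 ≤ v r)
    (hineq : ∀ r > (0 : ℝ),
      C₁ * r ^ (-a) * v r ^ p ≤
        -(1 / r ^ (n - 1)) * deriv (fun s => s ^ (n - 1) * deriv w s) r)
    (hlim : Tendsto (fun r => r ^ (n - 1) * deriv w r) (𝓝[>] 0) (𝓝 0)) :
    Tendsto w atTop atBot ∧ ¬ (∀ r ≥ (0 : ℝ), 0 ≤ w r) := by
  set φ : ℝ → ℝ := fun s => s ^ (n - 1) * deriv w s with hφdef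
  have hm1 : 1 ≤ n - 1 := by omega
  -- differentiability facts
  have hwd : ∀ r : ℝ, 0 < r → DifferentiableAt ℝ w r := fun r hr =>
    (hw.differentiableOn (by norm_num)).differentiableAt (Ici_mem_nhds hr)
  have hw' : ContDiffOn ℝ 1 (deriv w) (Ioi 0) :=
    (hw.mono Ioi_subset_Ici_self).deriv_of_isOpen isOpen_Ioi (by norm_num)
  have hw'd : ∀ r : ℝ, 0 < r → DifferentiableAt ℝ (deriv w) r := fun r hr =>
    (hw'.differentiableOn (by norm_num)).differentiableAt (Ioi_mem_nhds hr)
  have hφd : ∀ r : ℝ, 0 < r → DifferentiableAt ℝ φ r := fun r hr =>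
    (differentiableAt_pow _).mul (hw'd r hr)
  -- constants
  set k : ℝ := ((n - 1 : ℕ) : ℝ) + 2 * p - a with hkdef
  set B : ℝ := C₁ * c ^ p with hBdef
  have hB : 0 < B := mul_pos hC₁ (Real.rpow_pos_of_pos hc p)
  have hkm1 : -1 ≤ k := by
    have : (1 : ℝ) ≤ ((n - 1 : ℕ) : ℝ) := by exact_mod_cast hm1
    simp only [hkdef]; linarith
  set R₀ : ℝ := max r₀ 1 with hR₀def
  have hR₀1 : (1:ℝ) ≤ R₀ := le_max_right _ _
  have hR₀pos : (0:ℝ) < R₀ := lt_of_lt_of_le one_pos hR₀1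
  -- the key derivative bound on φ
  have hφ' : ∀ r : ℝ, R₀ ≤ r → deriv φ r ≤ -(B * r ^ k) := by
    intro r hRr
    have hr : (0:ℝ) < r := lt_of_lt_of_le hR₀pos hRr
    have hr1 : (1:ℝ) ≤ r := le_trans hR₀1 hRr
    have hrr₀ : r₀ ≤ r := le_trans (le_max_left _ _) hRr
    have hrm : (0:ℝ) < r ^ (n - 1) := pow_pos hr _
    have h1 : C₁ * r ^ (-a) * v r ^ p ≤ (-deriv φ r) / r ^ (n - 1) := by
      have h := hineq r hr
      rw [show -(1 / r ^ (n-1)) * deriv φ r = (-deriv φ r) / r ^ (n-1) by ring] at h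
      exact h
    have h2 : C₁ * r ^ (-a) * v r ^ p * r ^ (n - 1) ≤ -deriv φ r :=
      (le_div_iff₀ hrm).mp h1
    have hvp : c ^ p * r ^ (2 * p) ≤ v r ^ p := by
      have h0 : (0:ℝ) ≤ c * r ^ 2 := by positivity
      have hle := Real.rpow_le_rpow h0 (hvlb r hrr₀) (by linarith : (0:ℝ) ≤ p)
      calc c ^ p * r ^ (2 * p) = (c * r ^ 2) ^ p := by
            rw [Real.mul_rpow hc.le (by positivity)]
            congr 1
            rw [← Real.rpow_natCast r 2, ← Real.rpow_mul hr.le]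
            push_cast; ring_nf
        _ ≤ v r ^ p := hle
    have key : B * r ^ k ≤ C₁ * r ^ (-a) * v r ^ p * r ^ (n - 1) := by
      have hra : (0:ℝ) < r ^ (-a) := Real.rpow_pos_of_pos hr _
      have step : C₁ * r ^ (-a) * (c ^ p * r ^ (2*p)) * r ^ (n-1) ≤
          C₁ * r ^ (-a) * v r ^ p * r ^ (n-1) := by
        gcongr
      refine le_trans (le_of_eq ?_) step
      rw [show C₁ * r^(-a) * (c^p * r^(2*p)) * r^(n-1)
            = (C₁ * c^p) * (r^(-a) * r^(2*p) * r^((n-1 : ℕ))) by ring]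
      rw [hBdef]
      congr 1
      rw [← Real.rpow_natCast r (n-1), ← Real.rpow_add hr, ← Real.rpow_add hr]
      congr 1
      rw [hkdef]; ring
    linarith
  -- continuity of φ on Ici R₀ etc.
  have hφc : ContinuousOn φ (Ici R₀) := fun x hx =>
    (hφd x (lt_of_lt_of_le hR₀pos hx)).continuousAt.continuousWithinAt
  -- produce uniform decay of deriv w
  have main : ∃ ε : ℝ, 0 < ε ∧ ∃ R₁ : ℝ, 1 ≤ R₁ ∧
      ∀ r : ℝ, R₁ ≤ r → deriv w r + ε * r⁻¹ ≤ 0 := by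
    rcases eq_or_lt_of_le hkm1 with hk | hk
    · -- k = -1, so n = 2
      have hn2 : n - 1 = 1 := by
        have h2 : ((n - 1 : ℕ) : ℝ) ≤ 1 := by
          rw [hkdef] at hk; linarith
        have h3 : (n - 1 : ℕ) ≤ 1 := by exact_mod_cast h2
        omega
      have H := antiHelper (f := φ) (g := fun x => B * Real.log x)
        (g' := fun x => B * x⁻¹) (R := R₀)
        hφc
        (ContinuousOn.mul continuousOn_const fun x hx =>
          (Real.continuousAt_log (ne_of_gt (lt_of_lt_of_le hR₀pos hx))).continuousWithinAt)
        (fun x hx => hφd x (lt_trans hR₀pos hx))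
        (fun x hx => (Real.hasDerivAt_log (ne_of_gt (lt_trans hR₀pos hx))).const_mul B)
        (fun x hx => by
          have h := hφ' x (le_of_lt hx)
          have hx0 : (0:ℝ) < x := lt_trans hR₀pos hx
          have e : x ^ k = x⁻¹ := by rw [← hk, Real.rpow_neg_one]
          rw [e] at h; linarith)
      set A' : ℝ := φ R₀ + B * Real.log R₀ with hA'def
      refine ⟨1, one_pos, max R₀ (Real.exp ((A' + 1) / B)),
        le_trans hR₀1 (le_max_left _ _), ?_⟩
      intro r hr
      have hrR₀ : R₀ ≤ r := le_trans (le_max_left _ _) hr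
      have hr0 : (0:ℝ) < r := lt_of_lt_of_le hR₀pos hrR₀
      have hφr : φ r ≤ A' - B * Real.log r := by
        have := H r hrR₀; rw [hA'def]; linarith
      have hlog : (A' + 1) / B ≤ Real.log r := by
        calc (A' + 1) / B = Real.log (Real.exp ((A' + 1) / B)) := (Real.log_exp _).symm
          _ ≤ Real.log r := Real.log_le_log (Real.exp_pos _) (le_trans (le_max_right _ _) hr)
      have hφ1 : φ r ≤ -1 := by
        have h5 : A' + 1 ≤ B * Real.log r := by
          have h6 := mul_le_mul_of_nonneg_left hlog hB.le
          rwa [mul_div_cancel₀ _ hB.ne'] at h6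
        linarith
      have h7 : r * deriv w r ≤ -1 := by
        have h8 := hφ1
        rw [hφdef] at h8
        simp only [hn2, pow_one] at h8
        exact h8
      have h9 : deriv w r ≤ (-1) / r := by
        apply (le_div_iff₀ hr0).mpr
        rw [mul_comm]; exact h7
      have h10 : (-1 : ℝ) / r = -(1 * r⁻¹) := by ring
      linarith [h9, h10.le]
    · -- -1 < k
      set K : ℝ := k + 1 with hKdef
      have hK : (0:ℝ) < K := by rw [hKdef]; linarith
      set B' : ℝ := B / K with hB'def
      have hB' : (0:ℝ) < B' := div_pos hB hK
      have H := antiHelper (f := φ) (g := fun x => B' * x ^ K)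
        (g' := fun x => B * x ^ k) (R := R₀)
        hφc
        (ContinuousOn.mul continuousOn_const fun x hx =>
          (Real.continuousAt_rpow_const x K
            (Or.inl (ne_of_gt (lt_of_lt_of_le hR₀pos hx)))).continuousWithinAt)
        (fun x hx => hφd x (lt_trans hR₀pos hx))
        (fun x hx => by
          have hx0 : (0:ℝ) < x := lt_trans hR₀pos hx
          have h := (Real.hasDerivAt_rpow_const (p := K) (Or.inl hx0.ne')).const_mul B'
          refine h.congr_deriv ?_
          have e1 : K - 1 = k := by rw [hKdef]; ring
          rw [e1, show B' * (K * x ^ k) = (B' * K) * x ^ k by ring, hB'def,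
            div_mul_cancel₀ _ hK.ne'])
        (fun x hx => by
          have h := hφ' x (le_of_lt hx)
          linarith)
      set A' : ℝ := φ R₀ + B' * R₀ ^ K with hA'def
      set R₁ : ℝ := max R₀ ((max (2 * A' / B') 1) ^ (1 / K)) with hR₁def
      refine ⟨B' / 2, by positivity, R₁, le_trans hR₀1 (le_max_left _ _), ?_⟩
      intro r hr
      have hrR₀ : R₀ ≤ r := le_trans (le_max_left _ _) hr
      have hr0 : (0:ℝ) < r := lt_of_lt_of_le hR₀pos hrR₀
      have hr1 : (1:ℝ) ≤ r := le_trans hR₀1 hrR₀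
      have hM : (0:ℝ) ≤ max (2 * A' / B') 1 := le_trans zero_le_one (le_max_right _ _)
      have hrK : max (2 * A' / B') 1 ≤ r ^ K := by
        have h1 : ((max (2 * A' / B') 1) ^ (1 / K)) ^ K ≤ r ^ K :=
          Real.rpow_le_rpow (Real.rpow_nonneg hM _)
            (le_trans (le_max_right _ _) hr) hK.le
        rwa [← Real.rpow_mul hM, one_div_mul_cancel hK.ne', Real.rpow_one] at h1
      have hA'le : A' ≤ B' / 2 * r ^ K := by
        have h2 : 2 * A' / B' ≤ r ^ K := le_trans (le_max_left _ _) hrK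
        have h3 := mul_le_mul_of_nonneg_left h2 (by positivity : (0:ℝ) ≤ B' / 2)
        calc A' = B' / 2 * (2 * A' / B') := by field_simp
          _ ≤ B' / 2 * r ^ K := h3
      have hφr : φ r ≤ -(B' / 2 * r ^ K) := by
        have := H r hrR₀; rw [hA'def] at *; linarith
      have hrpow : (0:ℝ) < r ^ (n - 1) := pow_pos hr0 _
      have hdw1 : deriv w r ≤ (-(B' / 2 * r ^ K)) / r ^ (n - 1) := by
        apply (le_div_iff₀ hrpow).mpr
        calc deriv w r * r ^ (n - 1) = φ r := by rw [hφdef]; ring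
          _ ≤ _ := hφr
      have hfinal : (-(B' / 2 * r ^ K)) / r ^ (n - 1) ≤ -(B' / 2 * r⁻¹) := by
        rw [neg_div, neg_le_neg_iff]
        have e2 : r ^ K / (r:ℝ) ^ (n - 1) = r ^ (K - ((n - 1 : ℕ) : ℝ)) := by
          rw [← Real.rpow_natCast r (n - 1), ← Real.rpow_sub hr0]
        rw [mul_div_assoc, e2]
        apply mul_le_mul_of_nonneg_left _ (by positivity : (0:ℝ) ≤ B' / 2)
        rw [← Real.rpow_neg_one r]
        apply Real.rpow_le_rpow_of_exponent_le hr1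
        rw [hKdef, hkdef]; push_cast; linarith
      linarith [hdw1, hfinal]
  obtain ⟨ε, hε, R₁, hR₁, hdw⟩ := main
  have hR₁pos : (0:ℝ) < R₁ := lt_of_lt_of_le one_pos hR₁
  -- integrate once more
  have hwfin : ∀ r : ℝ, R₁ ≤ r →
      w r ≤ (w R₁ + ε * Real.log R₁) - ε * Real.log r := by
    have H := antiHelper (f := w) (g := fun x => ε * Real.log x)
      (g' := fun x => ε * x⁻¹) (R := R₁)
      (hw.continuousOn.mono (by intro x hx; exact le_trans hR₁pos.le hx))
      (ContinuousOn.mul continuousOn_const (fun x hx =>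
        (Real.continuousAt_log (ne_of_gt (lt_of_lt_of_le hR₁pos hx))).continuousWithinAt))
      (fun x hx => hwd x (lt_trans hR₁pos hx))
      (fun x hx => (Real.hasDerivAt_log (ne_of_gt (lt_trans hR₁pos hx))).const_mul ε)
      (fun x hx => hdw x (le_of_lt hx))
    intro r hr
    have := H r hr
    linarith
  have htend : Tendsto w atTop atBot := by
    apply tendsto_atBot_mono' atTop
      (eventually_atTop.mpr ⟨R₁, fun r hr => hwfin r hr⟩)
    have h1 : Tendsto (fun r : ℝ => ε * Real.log r) atTop atTop :=
      (Real.tendsto_log_atTop).const_mul_atTop hε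
    exact tendsto_atBot_add_const_left _ _ (tendsto_neg_atTop_atBot.comp h1)
  refine ⟨htend, fun hcontra => ?_⟩
  have := (htend.eventually (eventually_lt_atBot 0)).and (eventually_ge_atTop (0:ℝ))
  obtain ⟨r, hr1, hr2⟩ := this.exists
  exact absurd (hcontra r hr2) (not_le.mpr hr1)
end

section
/- Let n ≥ 2, p > 1, α₀ ≥ max{1, 2n/p}, C₀ ∈ (0,1], and suppose that for every k ∈ ℕ there are numbers l_k > 0, α_k > 0 defined by α_{k+1} = 2 α_k p and l_{k+1} = C₀ l_k^p / (2 α_k p)^n. Then l_k ≥ (2p)^{nk/(p-1)} · [ C₀^{1/(p-1)} l₀ / ( (2p)^{np/(p-1)²} α₀^{n/(p-1)} ) ]^{p^k} for all k ≥ 0. In particular, if l₀ = 2 C₀^{-1/(p-1)} (2p)^{np/(p-1)²} α₀^{n/(p-1)}, then l_k ≥ (2p)^{nk/(p-1)} 2^{p^k} → ∞ as k → ∞. -/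
open Filter Real

private lemma eq_of_log_eq' {x y : ℝ} (hx : 0 < x) (hy : 0 < y)
    (h : Real.log x = Real.log y) : x = y := by
  rw [← Real.exp_log hx, ← Real.exp_log hy, h]

theorem iteration_sequence_growth
    (n : ℕ) (hn : 2 ≤ n) (p C₀ : ℝ) (hp : 1 < p) (hC₀ : 0 < C₀) (hC₀' : C₀ ≤ 1)
    (l α : ℕ → ℝ) (hl : ∀ k, 0 < l k) (hα : ∀ k, 0 < α k)
    (hα₀ : max 1 (2 * n / p) ≤ α 0)
    (hαrec : ∀ k, α (k + 1) = 2 * α k * p)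
    (hlrec : ∀ k, l (k + 1) = C₀ * l k ^ p / (2 * α k * p) ^ n) :
    (∀ k : ℕ, (2 * p) ^ ((n * k : ℝ) / (p - 1)) *
        (C₀ ^ (1 / (p - 1)) * l 0 /
          ((2 * p) ^ ((n : ℝ) * p / (p - 1) ^ 2) * α 0 ^ ((n : ℝ) / (p - 1))))
          ^ (p ^ k) ≤ l k) ∧
    (l 0 = 2 * C₀ ^ (-(1 / (p - 1))) * (2 * p) ^ ((n : ℝ) * p / (p - 1) ^ 2) *
        α 0 ^ ((n : ℝ) / (p - 1)) →
      (∀ k : ℕ, (2 * p) ^ ((n * k : ℝ) / (p - 1)) * 2 ^ (p ^ k) ≤ l k) ∧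
      Tendsto l atTop atTop) := by
  have hq : (0:ℝ) < p - 1 := by linarith
  have hq' : p - 1 ≠ 0 := ne_of_gt hq
  have hp0 : (0:ℝ) < p := by linarith
  have h2p : (0:ℝ) < 2 * p := by linarith
  have h2p1 : (1:ℝ) < 2 * p := by linarith
  have hα0 : (1:ℝ) ≤ α 0 := le_trans (le_max_left _ _) hα₀
  have hα0pos : (0:ℝ) < α 0 := hα 0
  set A : ℝ := C₀ ^ (1 / (p - 1)) * l 0 /
      ((2 * p) ^ ((n : ℝ) * p / (p - 1) ^ 2) * α 0 ^ ((n : ℝ) / (p - 1))) with hA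
  have hApos : 0 < A := by
    apply div_pos
    · exact mul_pos (Real.rpow_pos_of_pos hC₀ _) (hl 0)
    · exact mul_pos (Real.rpow_pos_of_pos h2p _) (Real.rpow_pos_of_pos hα0pos _)
  set D : ℝ := C₀ * α 0 ^ (-(n:ℝ)) * (2 * p) ^ (-((n:ℝ) * p / (p - 1))) with hD
  have hDpos : 0 < D :=
    mul_pos (mul_pos hC₀ (Real.rpow_pos_of_pos hα0pos _)) (Real.rpow_pos_of_pos h2p _)
  have hD1 : D ≤ 1 := by
    have h1 : α 0 ^ (-(n:ℝ)) ≤ 1 :=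
      Real.rpow_le_one_of_one_le_of_nonpos hα0 (neg_nonpos.mpr (by positivity))
    have h2 : (2 * p) ^ (-((n:ℝ) * p / (p - 1))) ≤ 1 :=
      Real.rpow_le_one_of_one_le_of_nonpos (le_of_lt h2p1)
        (neg_nonpos.mpr (by positivity))
    have h3 : C₀ * α 0 ^ (-(n:ℝ)) ≤ 1 := by
      calc C₀ * α 0 ^ (-(n:ℝ)) ≤ 1 * 1 :=
            mul_le_mul hC₀' h1 (by positivity) (by norm_num)
        _ = 1 := by norm_num
    calc D ≤ 1 * 1 := mul_le_mul h3 h2 (by positivity) (by norm_num)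
      _ = 1 := by norm_num
  -- logs
  have hlogD : Real.log D = Real.log C₀ - (n:ℝ) * Real.log (α 0)
      - (n:ℝ) * p / (p - 1) * Real.log (2 * p) := by
    rw [hD, Real.log_mul (by positivity) (by positivity),
      Real.log_mul (ne_of_gt hC₀) (by positivity),
      Real.log_rpow hα0pos, Real.log_rpow h2p]
    ring
  have hl0p : 0 < l 0 := hl 0
  have hlogA : Real.log A = 1 / (p - 1) * Real.log C₀ + Real.log (l 0)
      - ((n:ℝ) * p / (p - 1) ^ 2 * Real.log (2 * p) + (n:ℝ) / (p - 1) * Real.log (α 0)) := by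
    rw [hA, Real.log_div (by positivity) (by positivity),
      Real.log_mul (by positivity) (ne_of_gt (hl 0)),
      Real.log_mul (by positivity) (by positivity),
      Real.log_rpow hC₀, Real.log_rpow h2p, Real.log_rpow hα0pos]
  -- the explicit formula for α
  have hαeq : ∀ k : ℕ, α k = (2 * p) ^ k * α 0 := by
    intro k
    induction k with
    | zero => simp
    | succ k ih => rw [hαrec k, ih, pow_succ]; ring
  -- strengthened lower bound
  set LB : ℕ → ℝ := fun k => (2 * p) ^ ((n * k : ℝ) / (p - 1)) * A ^ (p ^ k)
      * D ^ (-(1 / (p - 1))) with hLB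
  have hLBpos : ∀ k, 0 < LB k := fun k => by
    exact mul_pos (mul_pos (Real.rpow_pos_of_pos h2p _) (Real.rpow_pos_of_pos hApos _))
      (Real.rpow_pos_of_pos hDpos _)
  have hLBlog : ∀ k : ℕ, Real.log (LB k) = (n * k : ℝ) / (p - 1) * Real.log (2 * p)
      + p ^ k * Real.log A + (-(1 / (p - 1))) * Real.log D := by
    intro k
    rw [hLB]
    simp only
    rw [Real.log_mul (by positivity) (by positivity),
      Real.log_mul (by positivity) (by positivity),
      Real.log_rpow h2p, Real.log_rpow hApos, Real.log_rpow hDpos]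
  have hLB0 : LB 0 = l 0 := by
    apply eq_of_log_eq' (hLBpos 0) (hl 0)
    rw [hLBlog 0, hlogA, hlogD]
    push_cast
    field_simp
    ring
  have hαklog : ∀ k : ℕ, Real.log (2 * α k * p)
      = ((k:ℝ) + 1) * Real.log (2 * p) + Real.log (α 0) := by
    intro k
    have h : 2 * α k * p = (2 * p) ^ (k + 1) * α 0 := by rw [hαeq k, pow_succ]; ring
    rw [h, Real.log_mul (by positivity) (by positivity), Real.log_pow]
    push_cast
    ring
  have hLBrec : ∀ k : ℕ, LB (k + 1) = C₀ * LB k ^ p / (2 * α k * p) ^ n := by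
    intro k
    have hαkpos : 0 < α k := hα k
    have h2αp : (0:ℝ) < 2 * α k * p := by positivity
    apply eq_of_log_eq' (hLBpos (k + 1)) (by positivity)
    rw [Real.log_div (by positivity) (by positivity),
      Real.log_mul (ne_of_gt hC₀) (by positivity), Real.log_rpow (hLBpos k),
      Real.log_pow, hαklog k, hLBlog (k + 1), hLBlog k, hlogD]
    have hpk : (p ^ (k + 1) : ℝ) = p * p ^ k := by rw [pow_succ]; ring
    rw [hpk]
    push_cast
    field_simp
    ring
  have hmain : ∀ k : ℕ, LB k ≤ l k := by
    intro k
    induction k with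
    | zero => exact le_of_eq hLB0
    | succ k ih =>
      rw [hLBrec k, hlrec k]
      have hαkpos : 0 < α k := hα k
      have h2αp : (0:ℝ) < (2 * α k * p) ^ n := by positivity
      have h1 : LB k ^ p ≤ l k ^ p :=
        Real.rpow_le_rpow (le_of_lt (hLBpos k)) ih (le_of_lt hp0)
      have h2 : C₀ * LB k ^ p ≤ C₀ * l k ^ p :=
        mul_le_mul_of_nonneg_left h1 (le_of_lt hC₀)
      exact (div_le_div_iff_of_pos_right h2αp).mpr h2
  have hD1' : (1:ℝ) ≤ D ^ (-(1 / (p - 1))) :=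
    Real.one_le_rpow_of_pos_of_le_one_of_nonpos hDpos hD1
      (neg_nonpos.mpr (by positivity))
  have part1 : ∀ k : ℕ, (2 * p) ^ ((n * k : ℝ) / (p - 1)) * A ^ (p ^ k) ≤ l k := by
    intro k
    refine le_trans ?_ (hmain k)
    rw [hLB]
    exact le_mul_of_one_le_right (by positivity) hD1'
  refine ⟨part1, fun hl0 => ?_⟩
  have hA2 : A = 2 := by
    apply eq_of_log_eq' hApos (by norm_num)
    rw [hlogA]
    have h : Real.log (l 0) = Real.log 2 + (-(1 / (p - 1))) * Real.log C₀
        + (n:ℝ) * p / (p - 1) ^ 2 * Real.log (2 * p)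
        + (n:ℝ) / (p - 1) * Real.log (α 0) := by
      rw [hl0, Real.log_mul (by positivity) (by positivity),
        Real.log_mul (by positivity) (by positivity),
        Real.log_mul (by norm_num) (by positivity),
        Real.log_rpow hC₀, Real.log_rpow h2p, Real.log_rpow hα0pos]
    rw [h]
    ring
  have part2 : ∀ k : ℕ, (2 * p) ^ ((n * k : ℝ) / (p - 1)) * 2 ^ (p ^ k) ≤ l k := by
    intro k
    have h := part1 k
    rwa [hA2] at h
  refine ⟨part2, ?_⟩
  have hlow : ∀ k : ℕ, (2:ℝ) ^ (p ^ k) ≤ l k := by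
    intro k
    refine le_trans ?_ (part2 k)
    exact le_mul_of_one_le_left (by positivity)
      (Real.one_le_rpow (le_of_lt h2p1) (by positivity))
  have h1 : Tendsto (fun k : ℕ => p ^ k) atTop atTop :=
    tendsto_pow_atTop_atTop_of_one_lt hp
  have h2 : Tendsto (fun x : ℝ => (2:ℝ) ^ x) atTop atTop := by
    have hlog2 : (0:ℝ) < Real.log 2 := Real.log_pos (by norm_num)
    have : Tendsto (fun x : ℝ => Real.exp (Real.log 2 * x)) atTop atTop :=
      Real.tendsto_exp_atTop.comp (tendsto_id.const_mul_atTop hlog2)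
    refine this.congr fun x => ?_
    rw [Real.rpow_def_of_pos (by norm_num)]
  exact tendsto_atTop_mono hlow (h2.comp h1)
end

section
/- Let n ≥ 2, p > 1, and let f : [0,1] → [0,∞) be continuous with f(r) ≥ l r^α on [0,1] for some l > 0, α ≥ max{1, 2n/p}. Suppose g, h ∈ C^2([0,1]) satisfy -(1/r^{n-1})(r^{n-1} g')' ≥ C₀ f(r)^p with g(r) ≤ g(0) ≤ 0 on [0,1], and -(1/r^{n-1})(r^{n-1} h')' = g with r^{n-1}g'(r), r^{n-1}h'(r) → 0 as r → 0. Then h(r) ≥ h(0) + [C₀ l^p / ((αp+n)(αp+2)(αp+n+2)(αp+4))] r^{αp+4} on [0,1]. -/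
open Filter Set Topology Real

private lemma aux_le_zero (φ : ℝ → ℝ)
    (hd : ∀ x ∈ Ioo (0:ℝ) 1, DifferentiableAt ℝ φ x)
    (hd0 : ∀ x ∈ Ioo (0:ℝ) 1, deriv φ x ≤ 0)
    (hlim : Tendsto φ (𝓝[>] (0:ℝ)) (𝓝 0)) :
    ∀ r ∈ Ioo (0:ℝ) 1, φ r ≤ 0 := by
  have hanti : AntitoneOn φ (Ioo 0 1) := by
    refine antitoneOn_of_deriv_nonpos (convex_Ioo _ _) ?_ ?_ ?_
    · exact fun x hx => (hd x hx).continuousAt.continuousWithinAt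
    · rw [interior_Ioo]; exact fun x hx => (hd x hx).differentiableWithinAt
    · rw [interior_Ioo]; exact hd0
  intro r hr
  refine ge_of_tendsto hlim ?_
  filter_upwards [Ioo_mem_nhdsGT_of_mem (⟨le_refl (0:ℝ), hr.1⟩ : (0:ℝ) ∈ Ico 0 r)] with s hs
  exact hanti ⟨hs.1, hs.2.trans hr.2⟩ hr hs.2.le

private lemma aux_le_init (φ : ℝ → ℝ)
    (hc : ContinuousOn φ (Ico 0 1))
    (hd : ∀ x ∈ Ioo (0:ℝ) 1, DifferentiableAt ℝ φ x)
    (hd0 : ∀ x ∈ Ioo (0:ℝ) 1, deriv φ x ≤ 0) :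
    ∀ r ∈ Ico (0:ℝ) 1, φ r ≤ φ 0 := by
  have hanti : AntitoneOn φ (Ico 0 1) := by
    refine antitoneOn_of_deriv_nonpos (convex_Ico _ _) hc ?_ ?_
    · rw [interior_Ico]; exact fun x hx => (hd x hx).differentiableWithinAt
    · rw [interior_Ico]; exact hd0
  intro r hr
  exact hanti (left_mem_Ico.2 one_pos) hr hr.1

theorem radial_iteration_step
    (n : ℕ) (hn : 2 ≤ n) (p l α C₀ : ℝ) (hp : 1 < p) (hl : 0 < l)
    (hα : max 1 (2 * n / p) ≤ α) (hC₀ : 0 < C₀)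
    (f : ℝ → ℝ) (hf : ContinuousOn f (Icc 0 1))
    (hf0 : ∀ r ∈ Icc (0 : ℝ) 1, 0 ≤ f r)
    (hflb : ∀ r ∈ Icc (0 : ℝ) 1, l * r ^ α ≤ f r)
    (g h : ℝ → ℝ)
    (hg : ContDiffOn ℝ 2 g (Icc 0 1)) (hh : ContDiffOn ℝ 2 h (Icc 0 1))
    (hgineq : ∀ r ∈ Ioc (0 : ℝ) 1,
      C₀ * f r ^ p ≤ -(1 / r ^ (n - 1)) * deriv (fun s => s ^ (n - 1) * deriv g s) r)
    (hgub : ∀ r ∈ Icc (0 : ℝ) 1, g r ≤ g 0) (hg0 : g 0 ≤ 0)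
    (hheq : ∀ r ∈ Ioc (0 : ℝ) 1,
      -(1 / r ^ (n - 1)) * deriv (fun s => s ^ (n - 1) * deriv h s) r = g r)
    (hglim : Tendsto (fun r => r ^ (n - 1) * deriv g r) (𝓝[>] 0) (𝓝 0))
    (hhlim : Tendsto (fun r => r ^ (n - 1) * deriv h r) (𝓝[>] 0) (𝓝 0)) :
    ∀ r ∈ Icc (0 : ℝ) 1,
      h 0 + C₀ * l ^ p / ((α * p + n) * (α * p + 2) * (α * p + n + 2) * (α * p + 4)) *
        r ^ (α * p + 4) ≤ h r := by
  have hp0 : (0:ℝ) < p := by linarith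
  have hα1 : (1:ℝ) ≤ α := le_trans (le_max_left _ _) hα
  have hn2 : (2:ℝ) ≤ (n:ℝ) := by exact_mod_cast hn
  set q : ℝ := α * p with hq
  have hq4 : (4:ℝ) ≤ q := by
    have h2 : 2 * (n:ℝ) / p ≤ α := le_trans (le_max_right _ _) hα
    have h3 := (div_le_iff₀ hp0).mp h2
    rw [hq]; linarith
  have hq0 : (0:ℝ) < q := by linarith
  set K : ℝ := C₀ * l ^ p with hK
  have hK0 : 0 < K := mul_pos hC₀ (Real.rpow_pos_of_pos hl p)
  have hqn : (0:ℝ) < q + (n:ℝ) := by linarith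
  have hq2 : (0:ℝ) < q + 2 := by linarith
  have hqn2 : (0:ℝ) < q + (n:ℝ) + 2 := by linarith
  have hq4' : (0:ℝ) < q + 4 := by linarith
  -- npow to rpow conversion
  have hpow : ∀ x : ℝ, x ^ (n-1) = x ^ ((n:ℝ) - 1) := by
    intro x
    rw [← Real.rpow_natCast x (n-1), Nat.cast_sub (by omega), Nat.cast_one]
  -- differentiability setup
  have hUo : IsOpen (Ioo (0:ℝ) 1) := isOpen_Ioo
  have hgI : ContDiffOn ℝ 2 g (Ioo 0 1) := hg.mono Ioo_subset_Icc_self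
  have hhI : ContDiffOn ℝ 2 h (Ioo 0 1) := hh.mono Ioo_subset_Icc_self
  have hg1 : ContDiffOn ℝ 1 (deriv g) (Ioo 0 1) := hgI.deriv_of_isOpen hUo (by norm_num)
  have hh1 : ContDiffOn ℝ 1 (deriv h) (Ioo 0 1) := hhI.deriv_of_isOpen hUo (by norm_num)
  have hg'diff : ∀ x ∈ Ioo (0:ℝ) 1, DifferentiableAt ℝ (deriv g) x := fun x hx =>
    ((hg1.differentiableOn one_ne_zero).differentiableAt (hUo.mem_nhds hx))
  have hh'diff : ∀ x ∈ Ioo (0:ℝ) 1, DifferentiableAt ℝ (deriv h) x := fun x hx =>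
    ((hh1.differentiableOn one_ne_zero).differentiableAt (hUo.mem_nhds hx))
  have hgdiff : ∀ x ∈ Ioo (0:ℝ) 1, DifferentiableAt ℝ g x := fun x hx =>
    (hgI.differentiableOn (by norm_num)).differentiableAt (hUo.mem_nhds hx)
  have hhdiff : ∀ x ∈ Ioo (0:ℝ) 1, DifferentiableAt ℝ h x := fun x hx =>
    (hhI.differentiableOn (by norm_num)).differentiableAt (hUo.mem_nhds hx)
  have hGdiff : ∀ x ∈ Ioo (0:ℝ) 1,
      DifferentiableAt ℝ (fun s => s ^ (n-1) * deriv g s) x := fun x hx =>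
    (differentiableAt_pow _).mul (hg'diff x hx)
  have hHdiff : ∀ x ∈ Ioo (0:ℝ) 1,
      DifferentiableAt ℝ (fun s => s ^ (n-1) * deriv h s) x := fun x hx =>
    (differentiableAt_pow _).mul (hh'diff x hx)
  -- rpow tendsto at 0+
  have hrpow0 : ∀ e : ℝ, 0 < e → Tendsto (fun r : ℝ => r ^ e) (𝓝[>] (0:ℝ)) (𝓝 0) := by
    intro e he
    have hc := (Real.continuousAt_rpow_const 0 e (Or.inr he.le)).tendsto
    rw [Real.zero_rpow he.ne'] at hc
    exact hc.mono_left nhdsWithin_le_nhds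
  have hrpowC : ∀ e : ℝ, 0 < e → ContinuousOn (fun r:ℝ => r ^ e) (Ico (0:ℝ) 1) := by
    intro e he x hx
    exact (Real.continuousAt_rpow_const x e (Or.inr he.le)).continuousWithinAt
  -- Step 1: bound on deriv G
  have hGderiv : ∀ x ∈ Ioo (0:ℝ) 1,
      deriv (fun s => s ^ (n-1) * deriv g s) x ≤ -(K * x ^ (q + ((n:ℝ)-1))) := by
    intro x hx
    have hx0 : (0:ℝ) < x := hx.1
    have hc : (0:ℝ) < x ^ (n-1) := pow_pos hx0 _
    have h1 := hgineq x ⟨hx0, hx.2.le⟩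
    have h2 : x ^ (n-1) * (C₀ * f x ^ p) ≤ - deriv (fun s => s ^ (n-1) * deriv g s) x := by
      have h3 := mul_le_mul_of_nonneg_left h1 hc.le
      have h4 : x ^ (n-1) * (-(1 / x ^ (n-1)) * deriv (fun s => s ^ (n-1) * deriv g s) x)
          = - deriv (fun s => s ^ (n-1) * deriv g s) x := by
        field_simp
      linarith [h3, h4.le, h4.ge]
    have hflb' : l * x ^ α ≤ f x := hflb x ⟨hx0.le, hx.2.le⟩
    have hfp : l ^ p * x ^ q ≤ f x ^ p := by
      have h5 : (l * x ^ α) ^ p ≤ f x ^ p :=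
        Real.rpow_le_rpow (by positivity) hflb' hp0.le
      calc l ^ p * x ^ q = (l * x ^ α) ^ p := by
            rw [Real.mul_rpow hl.le (Real.rpow_nonneg hx0.le _), ← Real.rpow_mul hx0.le, ← hq]
        _ ≤ f x ^ p := h5
    have h6 : K * x ^ (q + ((n:ℝ)-1)) ≤ x ^ (n-1) * (C₀ * f x ^ p) := by
      have h7 : x ^ (q + ((n:ℝ)-1)) = x ^ q * x ^ ((n:ℝ)-1) := Real.rpow_add hx0 _ _
      have h9 : (0:ℝ) < x ^ ((n:ℝ)-1) := Real.rpow_pos_of_pos hx0 _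
      have h10 := mul_le_mul_of_nonneg_left hfp hC₀.le
      have h11 := mul_le_mul_of_nonneg_left h10 h9.le
      rw [h7, hpow x]
      calc K * (x ^ q * x ^ ((n:ℝ)-1)) = x ^ ((n:ℝ)-1) * (C₀ * (l ^ p * x ^ q)) := by
            rw [hK]; ring
        _ ≤ x ^ ((n:ℝ)-1) * (C₀ * f x ^ p) := h11
    linarith
  -- Step 2: bound on G itself
  set c1 : ℝ := K / (q + (n:ℝ)) with hc1
  have hc10 : 0 < c1 := div_pos hK0 hqn
  have hΦ : ∀ x ∈ Ioo (0:ℝ) 1,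
      HasDerivAt (fun s : ℝ => s ^ (n-1) * deriv g s + c1 * s ^ (q+(n:ℝ)))
        (deriv (fun s : ℝ => s ^ (n-1) * deriv g s) x + c1 * ((q+(n:ℝ)) * x ^ (q+(n:ℝ)-1))) x :=
    fun x hx => ((hGdiff x hx).hasDerivAt).add
      ((Real.hasDerivAt_rpow_const (Or.inl hx.1.ne')).const_mul c1)
  have hGle : ∀ x ∈ Ioo (0:ℝ) 1,
      x ^ (n-1) * deriv g x ≤ -(c1 * x ^ (q+(n:ℝ))) := by
    have key := aux_le_zero (fun s : ℝ => s ^ (n-1) * deriv g s + c1 * s ^ (q+(n:ℝ)))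
      (fun x hx => (hΦ x hx).differentiableAt)
      (by
        intro x hx
        rw [(hΦ x hx).deriv]
        have hb := hGderiv x hx
        have he : q + (n:ℝ) - 1 = q + ((n:ℝ)-1) := by ring
        rw [he]
        have heq : c1 * ((q+(n:ℝ)) * x ^ (q + ((n:ℝ)-1))) = K * x ^ (q + ((n:ℝ)-1)) := by
          rw [hc1]; field_simp
        rw [heq]; linarith)
      (by
        have := hglim.add ((hrpow0 _ hqn).const_mul c1)
        simpa using this)
    intro x hx
    have := key x hx
    linarith
  -- Step 3: bound on deriv g
  have hg'le : ∀ x ∈ Ioo (0:ℝ) 1, deriv g x ≤ -(c1 * x ^ (q+1)) := by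
    intro x hx
    have hx0 : (0:ℝ) < x := hx.1
    have h1 := hGle x hx
    have hcr : (0:ℝ) < x ^ ((n:ℝ)-1) := Real.rpow_pos_of_pos hx0 _
    have hE : x ^ (q+(n:ℝ)) = x ^ ((n:ℝ)-1) * x ^ (q+1) := by
      rw [← Real.rpow_add hx0]; ring_nf
    rw [hpow x, hE] at h1
    have h2 : x ^ ((n:ℝ)-1) * deriv g x ≤ x ^ ((n:ℝ)-1) * (-(c1 * x ^ (q+1))) := by
      nlinarith [h1]
    exact (mul_le_mul_iff_of_pos_left hcr).mp h2
  -- Step 4: bound on g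
  set c2 : ℝ := c1 / (q + 2) with hc2
  have hc20 : 0 < c2 := div_pos hc10 hq2
  have hΨ : ∀ x ∈ Ioo (0:ℝ) 1,
      HasDerivAt (fun s : ℝ => g s + c2 * s ^ (q+2))
        (deriv g x + c2 * ((q+2) * x ^ (q+2-1))) x := fun x hx =>
    ((hgdiff x hx).hasDerivAt).add
      ((Real.hasDerivAt_rpow_const (Or.inl hx.1.ne')).const_mul c2)
  have hgle2 : ∀ x ∈ Ico (0:ℝ) 1, g x ≤ -(c2 * x ^ (q+2)) := by
    have key := aux_le_init (fun s : ℝ => g s + c2 * s ^ (q+2))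
      ((hg.continuousOn.mono Ico_subset_Icc_self).add
        (continuousOn_const.mul (hrpowC _ hq2)))
      (fun x hx => (hΨ x hx).differentiableAt)
      (by
        intro x hx
        rw [(hΨ x hx).deriv]
        have hb := hg'le x hx
        have he : q + 2 - 1 = q + 1 := by ring
        rw [he]
        have heq : c2 * ((q+2) * x ^ (q+1)) = c1 * x ^ (q+1) := by
          rw [hc2]; field_simp
        rw [heq]; linarith)
    intro x hx
    have h1 := key x hx
    simp only [Real.zero_rpow hq2.ne', mul_zero, add_zero] at h1
    linarith [hg0]
  -- Step 5: bound on deriv H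
  have hHderiv : ∀ x ∈ Ioo (0:ℝ) 1,
      c2 * x ^ (q+(n:ℝ)+1) ≤ deriv (fun s => s ^ (n-1) * deriv h s) x := by
    intro x hx
    have hx0 : (0:ℝ) < x := hx.1
    have hc : (0:ℝ) < x ^ (n-1) := pow_pos hx0 _
    have h1 := hheq x ⟨hx0, hx.2.le⟩
    have h2 : x ^ (n-1) * g x = - deriv (fun s => s ^ (n-1) * deriv h s) x := by
      rw [← h1]; field_simp
    have hE2 : x ^ ((n:ℝ)-1) * x ^ (q+2) = x ^ (q+(n:ℝ)+1) := by
      rw [← Real.rpow_add hx0]; ring_nf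
    have hgx : c2 * x ^ (q+2) ≤ -(g x) := by linarith [hgle2 x ⟨hx0.le, hx.2⟩]
    calc c2 * x ^ (q+(n:ℝ)+1) = x ^ ((n:ℝ)-1) * (c2 * x ^ (q+2)) := by
          rw [← hE2]; ring
      _ ≤ x ^ ((n:ℝ)-1) * (-(g x)) :=
          mul_le_mul_of_nonneg_left hgx (Real.rpow_pos_of_pos hx0 _).le
      _ = -(x ^ ((n:ℝ)-1) * g x) := by ring
      _ = deriv (fun s => s ^ (n-1) * deriv h s) x := by
          rw [← hpow x, h2, neg_neg]
  -- Step 6: bound on H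
  set c3 : ℝ := c2 / (q + (n:ℝ) + 2) with hc3
  have hc30 : 0 < c3 := div_pos hc20 hqn2
  have hΘ : ∀ x ∈ Ioo (0:ℝ) 1,
      HasDerivAt (fun s : ℝ => c3 * s ^ (q+(n:ℝ)+2) - s ^ (n-1) * deriv h s)
        (c3 * ((q+(n:ℝ)+2) * x ^ (q+(n:ℝ)+2-1)) - deriv (fun s : ℝ => s ^ (n-1) * deriv h s) x)
        x := fun x hx =>
    (((Real.hasDerivAt_rpow_const (Or.inl hx.1.ne')).const_mul c3)).sub
      ((hHdiff x hx).hasDerivAt)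
  have hHle : ∀ x ∈ Ioo (0:ℝ) 1,
      c3 * x ^ (q+(n:ℝ)+2) ≤ x ^ (n-1) * deriv h x := by
    have key := aux_le_zero (fun s : ℝ => c3 * s ^ (q+(n:ℝ)+2) - s ^ (n-1) * deriv h s)
      (fun x hx => (hΘ x hx).differentiableAt)
      (by
        intro x hx
        rw [(hΘ x hx).deriv]
        have hb := hHderiv x hx
        have he : q + (n:ℝ) + 2 - 1 = q + (n:ℝ) + 1 := by ring
        rw [he]
        have heq : c3 * ((q+(n:ℝ)+2) * x ^ (q+(n:ℝ)+1)) = c2 * x ^ (q+(n:ℝ)+1) := by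
          rw [hc3]; field_simp
        rw [heq]; linarith)
      (by
        have := ((hrpow0 _ (by linarith : (0:ℝ) < q+(n:ℝ)+2)).const_mul c3).sub hhlim
        simpa using this)
    intro x hx
    have := key x hx
    linarith
  -- Step 7: bound on deriv h
  have hh'le : ∀ x ∈ Ioo (0:ℝ) 1, c3 * x ^ (q+3) ≤ deriv h x := by
    intro x hx
    have hx0 : (0:ℝ) < x := hx.1
    have h1 := hHle x hx
    have hcr : (0:ℝ) < x ^ ((n:ℝ)-1) := Real.rpow_pos_of_pos hx0 _
    have hE : x ^ (q+(n:ℝ)+2) = x ^ ((n:ℝ)-1) * x ^ (q+3) := by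
      rw [← Real.rpow_add hx0]; ring_nf
    rw [hpow x, hE] at h1
    have h2 : x ^ ((n:ℝ)-1) * (c3 * x ^ (q+3)) ≤ x ^ ((n:ℝ)-1) * deriv h x := by
      nlinarith [h1]
    exact (mul_le_mul_iff_of_pos_left hcr).mp h2
  -- Step 8: bound on h
  set c4 : ℝ := c3 / (q + 4) with hc4
  have hc40 : 0 < c4 := div_pos hc30 hq4'
  have hΞ : ∀ x ∈ Ioo (0:ℝ) 1,
      HasDerivAt (fun s : ℝ => c4 * s ^ (q+4) - h s)
        (c4 * ((q+4) * x ^ (q+4-1)) - deriv h x) x := fun x hx =>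
    (((Real.hasDerivAt_rpow_const (Or.inl hx.1.ne')).const_mul c4)).sub
      ((hhdiff x hx).hasDerivAt)
  have hmain : ∀ x ∈ Ico (0:ℝ) 1, h 0 + c4 * x ^ (q+4) ≤ h x := by
    have key := aux_le_init (fun s : ℝ => c4 * s ^ (q+4) - h s)
      ((continuousOn_const.mul (hrpowC _ hq4')).sub
        (hh.continuousOn.mono Ico_subset_Icc_self))
      (fun x hx => (hΞ x hx).differentiableAt)
      (by
        intro x hx
        rw [(hΞ x hx).deriv]
        have hb := hh'le x hx
        have he : q + 4 - 1 = q + 3 := by ring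
        rw [he]
        have heq : c4 * ((q+4) * x ^ (q+3)) = c3 * x ^ (q+3) := by
          rw [hc4]; field_simp
        rw [heq]; linarith)
    intro x hx
    have h1 := key x hx
    simp only [Real.zero_rpow hq4'.ne', mul_zero, zero_sub] at h1
    linarith
  -- identify the constant
  have hconst : C₀ * l ^ p / ((α * p + n) * (α * p + 2) * (α * p + n + 2) * (α * p + 4)) = c4 := by
    rw [hc4, hc3, hc2, hc1, hK, ← hq]
    field_simp
  -- conclude
  intro r hr
  rw [hconst]
  rcases eq_or_lt_of_le hr.2 with h1 | h1
  · -- r = 1 : pass to the limit from the left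
    subst h1
    have hIoo : Ioo (0:ℝ) 1 ∈ 𝓝[<] (1:ℝ) := Ioo_mem_nhdsLT_of_mem ⟨one_pos, le_refl 1⟩
    have hmem : Icc (0:ℝ) 1 ∈ 𝓝[<] (1:ℝ) :=
      mem_of_superset hIoo (fun s hs => ⟨hs.1.le, hs.2.le⟩)
    have htends_h : Tendsto h (𝓝[<] (1:ℝ)) (𝓝 (h 1)) :=
      (hh.continuousOn 1 (right_mem_Icc.2 zero_le_one)).mono_left (nhdsWithin_le_of_mem hmem)
    have htends_F : Tendsto (fun s : ℝ => h 0 + c4 * s ^ (q+4)) (𝓝[<] (1:ℝ))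
        (𝓝 (h 0 + c4 * (1:ℝ) ^ (q+4))) := by
      refine Tendsto.const_add _ ?_
      refine Tendsto.const_mul _ ?_
      exact ((Real.continuousAt_rpow_const 1 (q+4) (Or.inl one_ne_zero)).tendsto.mono_left
        nhdsWithin_le_nhds)
    refine le_of_tendsto_of_tendsto htends_F htends_h ?_
    filter_upwards [hIoo] with s hs
    exact hmain s ⟨hs.1.le, hs.2⟩
  · exact hmain r ⟨hr.1, h1⟩
end

section
/- Let n ≥ 3 and let h be a nonnegative locally integrable function on ℝ^n, not identically zero a.e., with ∫_{ℝ^n} h(z)/|z|^{n-2} dz < ∞. Then there exist C > 0 and R₀ ≥ 3 such that for all |y| ≥ R₀: ∫_{ℝ^n} h(z)/|y-z|² dz ≥ C / (|y|² ln|y|). -/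
open MeasureTheory Real

theorem lower_bound_potential_at_infinity
    (n : ℕ) (hn : 3 ≤ n) (h : EuclideanSpace ℝ (Fin n) → ℝ)
    (h0 : ∀ z, 0 ≤ h z) (hloc : LocallyIntegrable h volume)
    (hne : ¬ (∀ᵐ z : EuclideanSpace ℝ (Fin n), h z = 0))
    (hint : Integrable (fun z : EuclideanSpace ℝ (Fin n) => h z / ‖z‖ ^ (n - 2))) :
    ∃ C > (0 : ℝ), ∃ R₀ ≥ (3 : ℝ), ∀ y : EuclideanSpace ℝ (Fin n), R₀ ≤ ‖y‖ →
      ENNReal.ofReal (C / (‖y‖ ^ 2 * Real.log ‖y‖)) ≤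
        ∫⁻ z, ENNReal.ofReal (h z / ‖y - z‖ ^ 2) := by
  have hmeas : AEMeasurable (fun z : EuclideanSpace ℝ (Fin n) => ENNReal.ofReal (h z)) volume :=
    ENNReal.measurable_ofReal.comp_aemeasurable hloc.aestronglyMeasurable.aemeasurable
  -- find a ball with positive integral of h
  have hball : ∃ k : ℕ, 0 < ∫⁻ z in Metric.ball (0 : EuclideanSpace ℝ (Fin n)) k, ENNReal.ofReal (h z) := by
    by_contra hc
    push_neg at hc
    have hzero : ∀ k : ℕ, (∫⁻ z in Metric.ball (0 : EuclideanSpace ℝ (Fin n)) k, ENNReal.ofReal (h z)) = 0 :=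
      fun k => le_antisymm (hc k) bot_le
    have htot : (∫⁻ z, ENNReal.ofReal (h z)) = 0 := by
      have hU : (⋃ k : ℕ, Metric.ball (0 : EuclideanSpace ℝ (Fin n)) k) = Set.univ := Metric.iUnion_ball_nat 0
      have := MeasureTheory.lintegral_iUnion_le (μ := volume) (fun k : ℕ => Metric.ball (0 : EuclideanSpace ℝ (Fin n)) k)
        (fun z => ENNReal.ofReal (h z))
      rw [hU, Measure.restrict_univ] at this
      simpa [hzero] using this
    have := (lintegral_eq_zero_iff' hmeas).mp htot
    refine hne ?_
    filter_upwards [this] with z hz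
    have : ENNReal.ofReal (h z) = 0 := hz
    have := ENNReal.ofReal_eq_zero.mp this
    linarith [h0 z]
  obtain ⟨k, hk⟩ := hball
  set I := ∫⁻ z in Metric.ball (0 : EuclideanSpace ℝ (Fin n)) k, ENNReal.ofReal (h z) with hI
  have hIfin : I < ⊤ := by
    have hcb : IntegrableOn h (Metric.closedBall (0 : EuclideanSpace ℝ (Fin n)) k) volume :=
      hloc.integrableOn_isCompact (isCompact_closedBall _ _)
    have hb : IntegrableOn h (Metric.ball (0 : EuclideanSpace ℝ (Fin n)) k) volume :=
      hcb.mono_set Metric.ball_subset_closedBall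
    have := hasFiniteIntegral_iff_norm h |>.mp hb.hasFiniteIntegral
    refine lt_of_le_of_lt (lintegral_mono fun z => ?_) this
    rw [Real.norm_eq_abs, abs_of_nonneg (h0 z)]
  refine ⟨I.toReal / 4, by have := ENNReal.toReal_pos hk.ne' hIfin.ne; positivity, max 3 (k + 1), le_max_left _ _, fun y hy => ?_⟩
  have hy3 : (3 : ℝ) ≤ ‖y‖ := le_trans (le_max_left _ _) hy
  have hyk : (k : ℝ) + 1 ≤ ‖y‖ := le_trans (le_max_right _ _) hy
  have hypos : (0 : ℝ) < ‖y‖ := by linarith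
  have hlog1 : (1 : ℝ) ≤ Real.log ‖y‖ := by
    rw [Real.le_log_iff_exp_le hypos]
    calc Real.exp 1 ≤ 2.7182818286 := Real.exp_one_lt_d9.le
      _ ≤ 3 := by norm_num
      _ ≤ ‖y‖ := hy3
  -- Step 1: drop the log
  have step1 : ENNReal.ofReal (I.toReal / 4 / (‖y‖ ^ 2 * Real.log ‖y‖)) ≤
      ENNReal.ofReal (I.toReal / 4 / ‖y‖ ^ 2) := by
    apply ENNReal.ofReal_le_ofReal
    apply div_le_div_of_nonneg_left (by positivity) (by positivity)
    nlinarith [sq_nonneg ‖y‖]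
  -- Step 2: rewrite as a lintegral over the ball
  have step2 : ENNReal.ofReal (I.toReal / 4 / ‖y‖ ^ 2) =
      ∫⁻ z in Metric.ball (0 : EuclideanSpace ℝ (Fin n)) k, ENNReal.ofReal (h z * (4 * ‖y‖ ^ 2)⁻¹) := by
    have : ∀ z : EuclideanSpace ℝ (Fin n), ENNReal.ofReal (h z * (4 * ‖y‖ ^ 2)⁻¹) =
        ENNReal.ofReal (h z) * ENNReal.ofReal ((4 * ‖y‖ ^ 2)⁻¹) := fun z =>
      ENNReal.ofReal_mul (h0 z)
    simp_rw [this]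
    rw [lintegral_mul_const'' _ (hmeas.restrict), ← hI]
    rw [← ENNReal.ofReal_toReal hIfin.ne, ← ENNReal.ofReal_mul ENNReal.toReal_nonneg]
    congr 1
    rw [div_div, div_eq_mul_inv, ENNReal.toReal_ofReal ENNReal.toReal_nonneg]
  -- Step 3: pointwise bound on the ball
  have step3 : (∫⁻ z in Metric.ball (0 : EuclideanSpace ℝ (Fin n)) k, ENNReal.ofReal (h z * (4 * ‖y‖ ^ 2)⁻¹)) ≤
      ∫⁻ z in Metric.ball (0 : EuclideanSpace ℝ (Fin n)) k, ENNReal.ofReal (h z / ‖y - z‖ ^ 2) := by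
    refine setLIntegral_mono' measurableSet_ball fun z hz => ?_
    apply ENNReal.ofReal_le_ofReal
    have hzk : ‖z‖ < k := by simpa using hz
    have hlb : (1 : ℝ) ≤ ‖y - z‖ := by
      have := norm_sub_norm_le y z
      have := abs_le.mp (abs_norm_sub_norm_le y z)
      linarith [this.1]
    have hub : ‖y - z‖ ≤ 2 * ‖y‖ := by
      have := norm_sub_le y z
      linarith
    have hsq : ‖y - z‖ ^ 2 ≤ 4 * ‖y‖ ^ 2 := by nlinarith [norm_nonneg (y - z)]
    rw [← div_eq_mul_inv]
    exact div_le_div_of_nonneg_left (h0 z) (by nlinarith) hsq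
  calc ENNReal.ofReal (I.toReal / 4 / (‖y‖ ^ 2 * Real.log ‖y‖)) ≤
      ENNReal.ofReal (I.toReal / 4 / ‖y‖ ^ 2) := step1
    _ = ∫⁻ z in Metric.ball (0 : EuclideanSpace ℝ (Fin n)) k, ENNReal.ofReal (h z * (4 * ‖y‖ ^ 2)⁻¹) := step2
    _ ≤ ∫⁻ z in Metric.ball (0 : EuclideanSpace ℝ (Fin n)) k, ENNReal.ofReal (h z / ‖y - z‖ ^ 2) := step3
    _ ≤ ∫⁻ z, ENNReal.ofReal (h z / ‖y - z‖ ^ 2) := setLIntegral_le_lintegral _ _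
end

section
/- Let n ≥ 3, 2 ≤ a < n, p > 1, and let u be continuous, positive on the closed unit ball of ℝ^n, and suppose w ∈ C^2(ℝ^n \ {0}) ∩ C(ℝ^n) satisfies -Δw(x) ≥ u(x)^p/|x|^a for 0 < |x| ≤ 1 and w is superharmonic with spherical average w̄ about 0 nonincreasing. Then one reaches a contradiction: more precisely, -w̄'(r) ≥ (c^p/(n-a)) r^{1-a} for 0 < r ≤ 1 with c = min_{|x|≤1} u(x) > 0, and integrating from 0 to 1 forces w̄(0) = +∞, contradicting continuity of w at 0. Hence no such w exists. -/
open MeasureTheory Filter Asymptotics Metric Set Real Topology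

noncomputable def laplacian {n : ℕ} (f : EuclideanSpace ℝ (Fin n) → ℝ)
    (x : EuclideanSpace ℝ (Fin n)) : ℝ :=
  ∑ i : Fin n, fderiv ℝ (fun y => fderiv ℝ f y (EuclideanSpace.single i 1)) x
    (EuclideanSpace.single i 1)

/-- `negLapIter k f` is `(-Δ)^k f`, the `k`-fold iterated negative Laplacian. -/
noncomputable def negLapIter {n : ℕ} (k : ℕ) (f : EuclideanSpace ℝ (Fin n) → ℝ) :
    EuclideanSpace ℝ (Fin n) → ℝ :=
  (fun g x => -laplacian g x)^[k] f

/-- The normalizing constant of the Riesz potential of order `α` in `ℝⁿ`. -/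
noncomputable def rieszConst (α : ℝ) (n : ℕ) : ℝ :=
  Real.Gamma (((n : ℝ) - α) / 2) / (Real.pi ^ ((n : ℝ) / 2) * 2 ^ α * Real.Gamma (α / 2))

section Helpers

/-- The derivative of `f(s) = (ε/2) log s + η s^(-1/2)`. -/
lemma hasDerivAt_radial_aux1 (ε η : ℝ) {t : ℝ} (ht : 0 < t) :
    HasDerivAt (fun s : ℝ => ε / 2 * Real.log s + η * s ^ (-(1 : ℝ) / 2))
      (ε / 2 * t⁻¹ + η * (-(1 : ℝ) / 2 * t ^ (-(3 : ℝ) / 2))) t := by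
  have h1 := Real.hasDerivAt_log (ne_of_gt ht)
  have h2 := Real.hasDerivAt_rpow_const (x := t) (p := -(1 : ℝ) / 2) (Or.inl (ne_of_gt ht))
  have h2' : HasDerivAt (fun s : ℝ => s ^ (-(1 : ℝ) / 2))
      (-(1 : ℝ) / 2 * t ^ (-(3 : ℝ) / 2)) t := by
    convert h2 using 2
    norm_num
  exact (h1.const_mul (ε / 2)).add (h2'.const_mul η)

/-- The second derivative of `f`. -/
lemma hasDerivAt_radial_aux2 (ε η : ℝ) {t : ℝ} (ht : 0 < t) :
    HasDerivAt (fun s : ℝ => ε / 2 * s⁻¹ + η * (-(1 : ℝ) / 2 * s ^ (-(3 : ℝ) / 2)))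
      (ε / 2 * (-(t ^ 2)⁻¹) + η * (-(1 : ℝ) / 2 * (-(3 : ℝ) / 2 * t ^ (-(5 : ℝ) / 2)))) t := by
  have h1 := hasDerivAt_inv (ne_of_gt ht)
  have h2 := Real.hasDerivAt_rpow_const (x := t) (p := -(3 : ℝ) / 2) (Or.inl (ne_of_gt ht))
  have h2' : HasDerivAt (fun s : ℝ => s ^ (-(3 : ℝ) / 2))
      (-(3 : ℝ) / 2 * t ^ (-(5 : ℝ) / 2)) t := by
    convert h2 using 2
    norm_num
  exact (h1.const_mul (ε / 2)).add ((h2'.const_mul (-(1 : ℝ) / 2)).const_mul η)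

/-- `f` is `C²` on `(0,∞)`. -/
lemma contDiffOn_radial_aux (ε η : ℝ) :
    ContDiffOn ℝ 2 (fun s : ℝ => ε / 2 * Real.log s + η * s ^ (-(1 : ℝ) / 2)) (Ioi 0) := by
  intro t ht
  apply ContDiffAt.contDiffWithinAt
  have hlog : ContDiffAt ℝ 2 Real.log t := Real.contDiffAt_log.mpr (ne_of_gt ht)
  have hr : ContDiffAt ℝ 2 (fun s : ℝ => s ^ (-(1 : ℝ) / 2)) t :=
    Real.contDiffAt_rpow_const_of_ne (ne_of_gt ht)
  exact (contDiffAt_const.mul hlog).add (contDiffAt_const.mul hr)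

/-- Evaluation of `f` at squares. -/
lemma radial_eval (ε η : ℝ) {r : ℝ} (hr : 0 < r) :
    ε / 2 * Real.log (r ^ 2) + η * (r ^ 2 : ℝ) ^ (-(1 : ℝ) / 2)
      = ε * Real.log r + η * r⁻¹ := by
  have h1 : Real.log (r ^ 2) = 2 * Real.log r := by
    rw [Real.log_pow]; push_cast; ring
  have h2 : (r ^ 2 : ℝ) ^ (-(1 : ℝ) / 2) = r⁻¹ := by
    rw [← Real.rpow_natCast r 2, ← Real.rpow_mul hr.le]
    norm_num
    exact Real.rpow_neg_one r
  rw [h1, h2]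
  ring

end Helpers

lemma second_deriv_test {f f' : ℝ → ℝ} {L : ℝ}
    (hmin : IsLocalMin f 0)
    (hd : ∀ᶠ t in 𝓝 (0 : ℝ), HasDerivAt f (f' t) t)
    (hd2 : HasDerivAt f' L 0) : 0 ≤ L := by
  by_contra hL
  push_neg at hL
  have hf'0 : f' 0 = 0 := by
    have h1 := hmin.deriv_eq_zero
    rwa [hd.self_of_nhds.deriv] at h1
  have hs : Tendsto (slope f' 0) (𝓝[≠] 0) (𝓝 L) := hasDerivAt_iff_tendsto_slope.1 hd2
  have hneg : ∀ᶠ t in 𝓝[>] (0 : ℝ), f' t < 0 := by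
    have h1 : ∀ᶠ t in 𝓝[≠] (0 : ℝ), slope f' 0 t < 0 := hs.eventually (Iio_mem_nhds hL)
    have h2 : ∀ᶠ t in 𝓝[>] (0 : ℝ), slope f' 0 t < 0 :=
      h1.filter_mono (nhdsWithin_mono _ (fun x hx => ne_of_gt hx))
    filter_upwards [h2, self_mem_nhdsWithin] with t ht ht0
    have hsl : slope f' 0 t = f' t / t := by
      simp [slope, hf'0, div_eq_inv_mul]
    rw [hsl] at ht
    have hmul := mul_neg_of_neg_of_pos ht ht0
    rwa [div_mul_cancel₀ _ (ne_of_gt ht0)] at hmul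
  obtain ⟨ε₁, hε₁, h1⟩ := Metric.eventually_nhds_iff.mp
    (hd.and (hmin : ∀ᶠ t in 𝓝 (0 : ℝ), f 0 ≤ f t))
  obtain ⟨ε₂, hε₂, h2⟩ := Metric.mem_nhdsWithin_iff.mp hneg
  set b := min ε₁ ε₂ / 2 with hb_def
  have hb : 0 < b := by positivity
  have hbε₁ : b < ε₁ := by
    have h : min ε₁ ε₂ ≤ ε₁ := min_le_left _ _
    have : b ≤ ε₁ / 2 := by rw [hb_def]; linarith
    linarith
  have hbε₂ : b < ε₂ := by
    have h : min ε₁ ε₂ ≤ ε₂ := min_le_right _ _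
    have : b ≤ ε₂ / 2 := by rw [hb_def]; linarith
    linarith
  have hdist : ∀ t : ℝ, 0 ≤ t → t ≤ b → dist t 0 < ε₁ := by
    intro t h0 htb
    rw [Real.dist_eq, sub_zero, abs_of_nonneg h0]
    linarith
  have hanti : StrictAntiOn f (Icc 0 b) := by
    apply strictAntiOn_of_deriv_neg (convex_Icc 0 b)
    · intro t ht
      exact ((h1 (hdist t ht.1 ht.2)).1.continuousAt).continuousWithinAt
    · intro t ht
      rw [interior_Icc] at ht
      rw [(h1 (hdist t ht.1.le ht.2.le)).1.deriv]
      apply h2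
      constructor
      · rw [Metric.mem_ball, Real.dist_eq, sub_zero, abs_of_nonneg ht.1.le]
        linarith [ht.2]
      · exact ht.1
  have hlt : f b < f 0 := hanti (left_mem_Icc.mpr hb.le) (right_mem_Icc.mpr hb.le) hb
  have hle : f 0 ≤ f b := (h1 (hdist b hb.le le_rfl)).2
  linarith

lemma diff_fderiv_apply {n : ℕ} {f : EuclideanSpace ℝ (Fin n) → ℝ}
    {x : EuclideanSpace ℝ (Fin n)} (hf : ContDiffAt ℝ 2 f x) (e : EuclideanSpace ℝ (Fin n)) :
    DifferentiableAt ℝ (fun y => fderiv ℝ f y e) x := by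
  have h := (hf.fderiv_right (m := 1) (by norm_num)).differentiableAt (by norm_num)
  have h2 := ((ContinuousLinearMap.apply ℝ ℝ e).differentiable.differentiableAt).comp x h
  exact h2

lemma laplacian_nonneg_of_isLocalMin {n : ℕ} {φ : EuclideanSpace ℝ (Fin n) → ℝ}
    {x : EuclideanSpace ℝ (Fin n)} {s : Set (EuclideanSpace ℝ (Fin n))}
    (hs : IsOpen s) (hx : x ∈ s) (hφ : ContDiffOn ℝ 2 φ s) (hmin : IsLocalMin φ x) :
    0 ≤ laplacian φ x := by
  unfold laplacian
  apply Finset.sum_nonneg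
  intro i _
  set e : EuclideanSpace ℝ (Fin n) := EuclideanSpace.single i 1 with he
  have hφx : ContDiffAt ℝ 2 φ x := hφ.contDiffAt (hs.mem_nhds hx)
  have hDe : DifferentiableAt ℝ (fun y => fderiv ℝ φ y e) x := diff_fderiv_apply hφx e
  -- the line through x in direction e
  set ℓ : ℝ → EuclideanSpace ℝ (Fin n) := fun t => x + t • e with hℓ
  have hℓ0 : ℓ 0 = x := by simp [hℓ]
  have hℓc : Continuous ℓ := by continuity
  have hℓd : ∀ t : ℝ, HasDerivAt ℓ e t := by
    intro t
    have h := ((hasDerivAt_id t).smul_const e).const_add x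
    simpa [hℓ] using h
  have hming : IsLocalMin (fun t => φ (ℓ t)) 0 := by
    have ht : Tendsto ℓ (𝓝 0) (𝓝 x) := by
      have := hℓc.tendsto 0
      rwa [hℓ0] at this
    have hmin' : IsMinFilter φ (𝓝 x) (ℓ 0) := by rw [hℓ0]; exact hmin
    exact hmin'.comp_tendsto ht
  have hd : ∀ᶠ t in 𝓝 (0 : ℝ), HasDerivAt (fun t => φ (ℓ t)) (fderiv ℝ φ (ℓ t) e) t := by
    have hmem : ℓ ⁻¹' s ∈ 𝓝 (0 : ℝ) := by
      apply hℓc.continuousAt.preimage_mem_nhds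
      rw [hℓ0]; exact hs.mem_nhds hx
    filter_upwards [hmem] with t ht
    have hdiff : DifferentiableAt ℝ φ (ℓ t) :=
      (hφ.contDiffAt (hs.mem_nhds ht)).differentiableAt (by norm_num)
    exact hdiff.hasFDerivAt.comp_hasDerivAt t (hℓd t)
  have hd2 : HasDerivAt (fun t => fderiv ℝ φ (ℓ t) e)
      (fderiv ℝ (fun y => fderiv ℝ φ y e) x e) 0 := by
    have hDe' : HasFDerivAt (fun y => fderiv ℝ φ y e)
        (fderiv ℝ (fun y => fderiv ℝ φ y e) x) (ℓ 0) := by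
      rw [hℓ0]; exact hDe.hasFDerivAt
    exact hDe'.comp_hasDerivAt 0 (hℓd 0)
  exact second_deriv_test hming hd hd2

lemma laplacian_add {n : ℕ} {f g : EuclideanSpace ℝ (Fin n) → ℝ}
    {s : Set (EuclideanSpace ℝ (Fin n))} (hs : IsOpen s)
    {x : EuclideanSpace ℝ (Fin n)} (hx : x ∈ s)
    (hf : ContDiffOn ℝ 2 f s) (hg : ContDiffOn ℝ 2 g s) :
    laplacian (fun y => f y + g y) x = laplacian f x + laplacian g x := by
  unfold laplacian
  rw [← Finset.sum_add_distrib]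
  refine Finset.sum_congr rfl fun i _ => ?_
  set e : EuclideanSpace ℝ (Fin n) := EuclideanSpace.single i 1 with he
  have hf1 : DifferentiableAt ℝ (fun y => fderiv ℝ f y e) x :=
    diff_fderiv_apply (hf.contDiffAt (hs.mem_nhds hx)) e
  have hg1 : DifferentiableAt ℝ (fun y => fderiv ℝ g y e) x :=
    diff_fderiv_apply (hg.contDiffAt (hs.mem_nhds hx)) e
  have hEv : (fun y => fderiv ℝ (fun z => f z + g z) y e) =ᶠ[𝓝 x]
      (fun y => fderiv ℝ f y e + fderiv ℝ g y e) := by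
    filter_upwards [hs.mem_nhds hx] with y hy
    have hfy : DifferentiableAt ℝ f y :=
      (hf.contDiffAt (hs.mem_nhds hy)).differentiableAt (by norm_num)
    have hgy : DifferentiableAt ℝ g y :=
      (hg.contDiffAt (hs.mem_nhds hy)).differentiableAt (by norm_num)
    rw [fderiv_fun_add hfy hgy, ContinuousLinearMap.add_apply]
  rw [hEv.fderiv_eq, fderiv_fun_add hf1 hg1, ContinuousLinearMap.add_apply]

lemma sum_coord_sq {n : ℕ} (x : EuclideanSpace ℝ (Fin n)) :
    ∑ i : Fin n, x i ^ 2 = ‖x‖ ^ 2 := by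
  rw [EuclideanSpace.norm_eq, Real.sq_sqrt (by positivity)]
  simp [sq_abs]

lemma laplacian_radial {n : ℕ} (f f' f'' : ℝ → ℝ)
    (hd1 : ∀ t : ℝ, 0 < t → HasDerivAt f (f' t) t)
    (hd2 : ∀ t : ℝ, 0 < t → HasDerivAt f' (f'' t) t)
    (x : EuclideanSpace ℝ (Fin n)) (hx : x ≠ 0) :
    laplacian (fun y => f (‖y‖ ^ 2)) x =
      4 * ‖x‖ ^ 2 * f'' (‖x‖ ^ 2) + 2 * n * f' (‖x‖ ^ 2) := by
  have hq : ∀ y : EuclideanSpace ℝ (Fin n), y ≠ 0 → (0 : ℝ) < ‖y‖ ^ 2 := by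
    intro y hy
    have := norm_pos_iff.mpr hy
    positivity
  have hFd : ∀ y : EuclideanSpace ℝ (Fin n), y ≠ 0 →
      HasFDerivAt (fun z => f (‖z‖ ^ 2)) (f' (‖y‖ ^ 2) • (2 • innerSL ℝ y)) y := by
    intro y hy
    exact (hd1 _ (hq y hy)).comp_hasFDerivAt y ((hasStrictFDerivAt_norm_sq y).hasFDerivAt)
  have key : ∀ i : Fin n,
      fderiv ℝ (fun y => fderiv ℝ (fun z => f (‖z‖ ^ 2)) y (EuclideanSpace.single i 1)) x
        (EuclideanSpace.single i 1)
      = 2 * f' (‖x‖ ^ 2) + 4 * f'' (‖x‖ ^ 2) * x i ^ 2 := by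
    intro i
    set e : EuclideanSpace ℝ (Fin n) := EuclideanSpace.single i 1 with he
    have hee : (inner ℝ e e : ℝ) = 1 := by
      rw [he, EuclideanSpace.inner_single_right]
      simp [EuclideanSpace.single_apply]
    have hxe : (inner ℝ x e : ℝ) = x i := by
      rw [he, EuclideanSpace.inner_single_right]
      simp
    set G : EuclideanSpace ℝ (Fin n) → ℝ := fun y => f' (‖y‖ ^ 2) * (2 * (innerSL ℝ e) y)
      with hG
    have hEv : (fun y => fderiv ℝ (fun z => f (‖z‖ ^ 2)) y e) =ᶠ[𝓝 x] G := by
      filter_upwards [IsOpen.mem_nhds isOpen_compl_singleton hx] with y hy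
      rw [(hFd y hy).fderiv]
      simp only [hG, ContinuousLinearMap.smul_apply, innerSL_apply_apply, smul_eq_mul,
        ContinuousLinearMap.coe_smul', Pi.smul_apply]
      rw [real_inner_comm]
      ring_nf
    have hA : HasFDerivAt (fun y => f' (‖y‖ ^ 2)) (f'' (‖x‖ ^ 2) • (2 • innerSL ℝ x)) x :=
      (hd2 _ (hq x hx)).comp_hasFDerivAt x ((hasStrictFDerivAt_norm_sq x).hasFDerivAt)
    have hB : HasFDerivAt (fun y => 2 * (innerSL ℝ e) y) ((2 : ℝ) • (innerSL ℝ e)) x :=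
      (innerSL ℝ e).hasFDerivAt.const_mul 2
    have hAB := hA.mul hB
    rw [hEv.fderiv_eq, HasFDerivAt.fderiv (f := G) hAB]
    simp only [ContinuousLinearMap.add_apply, ContinuousLinearMap.smul_apply,
      ContinuousLinearMap.coe_smul', Pi.smul_apply, innerSL_apply_apply, smul_eq_mul]
    have hex : (inner ℝ e x : ℝ) = x i := by rw [real_inner_comm]; exact hxe
    simp only [nsmul_eq_mul, Nat.cast_ofNat, smul_eq_mul]
    simp only [hee, hex, hxe]
    ring
  unfold laplacian
  rw [Finset.sum_congr rfl (fun i _ => key i)]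
  rw [Finset.sum_add_distrib, Finset.sum_const, ← Finset.mul_sum, sum_coord_sq]
  simp [Finset.card_univ]
  ring

theorem no_superharmonic_supersolution_strong_singularity
    (n : ℕ) (hn : 3 ≤ n) (a p : ℝ) (ha2 : 2 ≤ a) (han : a < n) (hp : 1 < p)
    (u w : EuclideanSpace ℝ (Fin n) → ℝ)
    (hu : Continuous u) (hupos : ∀ x, ‖x‖ ≤ 1 → 0 < u x)
    (hwreg : ContDiffOn ℝ 2 w {(0 : EuclideanSpace ℝ (Fin n))}ᶜ)
    (hwc : Continuous w)
    (hwineq : ∀ x : EuclideanSpace ℝ (Fin n), x ≠ 0 → ‖x‖ ≤ 1 →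
      u x ^ p / ‖x‖ ^ a ≤ -laplacian w x)
    (hwsuper : ∀ x : EuclideanSpace ℝ (Fin n), x ≠ 0 → 0 ≤ -laplacian w x)
    (hwavg : ∀ r₁ r₂ : ℝ, 0 < r₁ → r₁ ≤ r₂ →
      (⨍ ξ : sphere (0 : EuclideanSpace ℝ (Fin n)) 1,
        w (r₂ • (ξ : EuclideanSpace ℝ (Fin n)))
        ∂(volume : Measure (EuclideanSpace ℝ (Fin n))).toSphere) ≤
      ⨍ ξ : sphere (0 : EuclideanSpace ℝ (Fin n)) 1,
        w (r₁ • (ξ : EuclideanSpace ℝ (Fin n)))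
        ∂(volume : Measure (EuclideanSpace ℝ (Fin n))).toSphere) :
    False := by
  classical
  have hn3 : (3 : ℝ) ≤ (n : ℝ) := by exact_mod_cast hn
  have hn2 : (0 : ℝ) < (n : ℝ) - 2 := by linarith
  -- a positive lower bound `c` for `u ^ p` on the closed unit ball
  obtain ⟨z₀, hz₀mem, hz₀min⟩ := (isCompact_closedBall (0 : EuclideanSpace ℝ (Fin n)) 1).exists_isMinOn
    ⟨0, by simp⟩ hu.continuousOn
  have hz₀pos : 0 < u z₀ := hupos z₀ (mem_closedBall_zero_iff.mp hz₀mem)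
  set c := u z₀ ^ p with hc_def
  have hc : 0 < c := Real.rpow_pos_of_pos hz₀pos p
  have hcle : ∀ x : EuclideanSpace ℝ (Fin n), ‖x‖ ≤ 1 → c ≤ u x ^ p := by
    intro x hx
    exact Real.rpow_le_rpow hz₀pos.le (hz₀min (mem_closedBall_zero_iff.mpr hx)) (by linarith)
  -- min and max of `w` on the closed unit ball
  obtain ⟨zm, hzmmem, hzm⟩ := (isCompact_closedBall (0 : EuclideanSpace ℝ (Fin n)) 1).exists_isMinOn
    ⟨0, by simp⟩ hwc.continuousOn
  obtain ⟨zM, hzMmem, hzM⟩ := (isCompact_closedBall (0 : EuclideanSpace ℝ (Fin n)) 1).exists_isMaxOn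
    ⟨0, by simp⟩ hwc.continuousOn
  set m₀ := w zm with hm₀_def
  set M := w zM with hM_def
  have hm₀ : ∀ y : EuclideanSpace ℝ (Fin n), ‖y‖ ≤ 1 → m₀ ≤ w y := fun y hy => hzm (mem_closedBall_zero_iff.mpr hy)
  have hM : ∀ y : EuclideanSpace ℝ (Fin n), ‖y‖ ≤ 1 → w y ≤ M := fun y hy => hzM (mem_closedBall_zero_iff.mpr hy)
  have hm₀M : m₀ ≤ M := le_trans (hm₀ 0 (by simp)) (hM 0 (by simp))
  -- parameters
  set ε := c / (2 * ((n : ℝ) - 2)) with hε_def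
  have hε : 0 < ε := by positivity
  have hεval : ε * ((n : ℝ) - 2) = c / 2 := by
    rw [hε_def]; field_simp
  set t := min (1 / 2 : ℝ) (Real.exp ((m₀ - M - 2) / ε)) with ht_def
  have ht0 : 0 < t := lt_min (by norm_num) (Real.exp_pos _)
  have ht2 : t ≤ 1 / 2 := min_le_left _ _
  have hlogt : ε * Real.log t ≤ m₀ - M - 2 := by
    have h1 : Real.log t ≤ (m₀ - M - 2) / ε := by
      have := (Real.log_le_log_iff ht0 (Real.exp_pos _)).mpr (min_le_right _ _)
      rwa [Real.log_exp] at this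
    have h2 := mul_le_mul_of_nonneg_left h1 hε.le
    calc ε * Real.log t ≤ ε * ((m₀ - M - 2) / ε) := h2
      _ = m₀ - M - 2 := by field_simp
  set δ := min (t / 2) ((t / (2 * ε)) ^ 2) with hδ_def
  have hδ0 : 0 < δ := lt_min (by positivity) (by positivity)
  have hδt2 : δ ≤ t / 2 := min_le_left _ _
  have hδt : δ < t := by linarith
  have hδ1 : δ < 1 := by linarith
  have hsqrtδ : Real.sqrt δ ≤ t / (2 * ε) := by
    calc Real.sqrt δ ≤ Real.sqrt ((t / (2 * ε)) ^ 2) := Real.sqrt_le_sqrt (min_le_right _ _)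
      _ = t / (2 * ε) := Real.sqrt_sq (by positivity)
  have hlogδ : Real.log δ < 0 := Real.log_neg hδ0 hδ1
  set η := ε * δ * (-Real.log δ) with hη_def
  have hη0 : 0 < η := mul_pos (mul_pos hε hδ0) (neg_pos.mpr hlogδ)
  have hηt : η ≤ t := by
    have hs0 : 0 < Real.sqrt δ := Real.sqrt_pos.mpr hδ0
    have hlog_inv : Real.log (Real.sqrt δ)⁻¹ ≤ (Real.sqrt δ)⁻¹ := by
      have := Real.log_le_sub_one_of_pos (inv_pos.mpr hs0)
      linarith
    have hlogeq : -Real.log δ = 2 * Real.log (Real.sqrt δ)⁻¹ := by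
      rw [Real.log_inv, Real.log_sqrt hδ0.le]; ring
    have h1 : -Real.log δ ≤ 2 * (Real.sqrt δ)⁻¹ := by
      rw [hlogeq]; linarith
    have h2 : η ≤ ε * δ * (2 * (Real.sqrt δ)⁻¹) := by
      rw [hη_def]
      exact mul_le_mul_of_nonneg_left h1 (by positivity)
    have h3 : ε * δ * (2 * (Real.sqrt δ)⁻¹) = 2 * ε * Real.sqrt δ := by
      have : δ * (Real.sqrt δ)⁻¹ = Real.sqrt δ := by
        rw [← div_eq_mul_inv]
        exact Real.div_sqrt
      calc ε * δ * (2 * (Real.sqrt δ)⁻¹) = 2 * ε * (δ * (Real.sqrt δ)⁻¹) := by ring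
        _ = 2 * ε * Real.sqrt δ := by rw [this]
    have h4 : 2 * ε * Real.sqrt δ ≤ 2 * ε * (t / (2 * ε)) :=
      mul_le_mul_of_nonneg_left hsqrtδ (by positivity)
    have h5 : 2 * ε * (t / (2 * ε)) = t := by field_simp
    have h2' : η ≤ 2 * ε * Real.sqrt δ := by rw [← h3]; exact h2
    have h4' : 2 * ε * Real.sqrt δ ≤ t := by rw [← h5]; exact h4
    linarith
  -- the radial comparison function
  set f : ℝ → ℝ := fun s => ε / 2 * Real.log s + η * s ^ (-(1 : ℝ) / 2) with hf_def
  set f' : ℝ → ℝ := fun s => ε / 2 * s⁻¹ + η * (-(1 : ℝ) / 2 * s ^ (-(3 : ℝ) / 2)) with hf'_def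
  set f'' : ℝ → ℝ := fun s =>
    ε / 2 * (-(s ^ 2)⁻¹) + η * (-(1 : ℝ) / 2 * (-(3 : ℝ) / 2 * s ^ (-(5 : ℝ) / 2))) with hf''_def
  have hd1 : ∀ s : ℝ, 0 < s → HasDerivAt f (f' s) s := fun s hs => hasDerivAt_radial_aux1 ε η hs
  have hd2 : ∀ s : ℝ, 0 < s → HasDerivAt f' (f'' s) s := fun s hs => hasDerivAt_radial_aux2 ε η hs
  set F : EuclideanSpace ℝ (Fin n) → ℝ := fun y => f (‖y‖ ^ 2) with hF_def
  have hFcd : ContDiffOn ℝ 2 F {(0 : EuclideanSpace ℝ (Fin n))}ᶜ := by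
    have hq : ContDiff ℝ 2 (fun y : EuclideanSpace ℝ (Fin n) => ‖y‖ ^ 2) := contDiff_norm_sq ℝ
    have hmaps : MapsTo (fun y : EuclideanSpace ℝ (Fin n) => ‖y‖ ^ 2) {(0 : EuclideanSpace ℝ (Fin n))}ᶜ (Ioi 0) := by
      intro y hy
      have : y ≠ 0 := hy
      have : 0 < ‖y‖ := norm_pos_iff.mpr this
      exact mem_Ioi.mpr (by positivity)
    exact (contDiffOn_radial_aux ε η).comp hq.contDiffOn hmaps
  set φ : EuclideanSpace ℝ (Fin n) → ℝ := fun y => w y + F y with hφ_def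
  have hφcd : ContDiffOn ℝ 2 φ {(0 : EuclideanSpace ℝ (Fin n))}ᶜ := hwreg.add hFcd
  -- the compact annulus
  set K := closedBall (0 : EuclideanSpace ℝ (Fin n)) 1 \ ball (0 : EuclideanSpace ℝ (Fin n)) δ with hK_def
  have hKmem : ∀ y : EuclideanSpace ℝ (Fin n), y ∈ K ↔ δ ≤ ‖y‖ ∧ ‖y‖ ≤ 1 := by
    intro y
    simp only [hK_def, mem_diff, mem_closedBall_zero_iff, mem_ball_zero_iff, not_lt]
    tauto
  have hKc : IsCompact K := (isCompact_closedBall _ _).diff isOpen_ball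
  -- the test point
  have hn0 : 0 < n := by omega
  set i0 : Fin n := ⟨0, hn0⟩ with hi0
  set xt : EuclideanSpace ℝ (Fin n) := t • EuclideanSpace.single i0 (1 : ℝ) with hxt_def
  have hxtnorm : ‖xt‖ = t := by
    rw [hxt_def, norm_smul, EuclideanSpace.norm_single]
    simp [abs_of_pos ht0]
  have hxtK : xt ∈ K := (hKmem xt).mpr ⟨by rw [hxtnorm]; linarith, by rw [hxtnorm]; linarith⟩
  -- φ is continuous on K
  have hKsub : K ⊆ {(0 : EuclideanSpace ℝ (Fin n))}ᶜ := by
    intro y hy h0y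
    have h := ((hKmem y).mp hy).1
    rw [h0y] at h
    simp at h
    linarith
  have hφcont : ContinuousOn φ K := hφcd.continuousOn.mono hKsub
  -- minimum of φ on K
  obtain ⟨z, hzK, hzmin⟩ := hKc.exists_isMinOn ⟨xt, hxtK⟩ hφcont
  obtain ⟨hzδ, hz1⟩ := (hKmem z).mp hzK
  have hz0 : z ≠ 0 := by
    intro h
    rw [h] at hzδ
    simp at hzδ
    linarith
  have hznorm : 0 < ‖z‖ := lt_of_lt_of_le hδ0 hzδ
  -- the minimum value is at least m₀
  have hkey : m₀ ≤ φ z := by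
    rcases eq_or_lt_of_le hzδ with hb1 | hb1
    · -- inner boundary : the comparison term vanishes
      have hcalc : η * δ⁻¹ = -(ε * Real.log δ) := by
        rw [hη_def]
        field_simp
      have : F z = 0 := by
        show ε / 2 * Real.log (‖z‖ ^ 2) + η * (‖z‖ ^ 2 : ℝ) ^ (-(1 : ℝ) / 2) = 0
        rw [radial_eval ε η hznorm, ← hb1, hcalc]
        ring
      rw [hφ_def]
      simp only
      rw [this, add_zero]
      exact hm₀ z hz1
    rcases eq_or_lt_of_le hz1 with hb2 | hb2
    · -- outer boundary : the comparison term is η ≥ 0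
      have : F z = η := by
        show ε / 2 * Real.log (‖z‖ ^ 2) + η * (‖z‖ ^ 2 : ℝ) ^ (-(1 : ℝ) / 2) = η
        rw [hb2]
        simp [Real.one_rpow]
      rw [hφ_def]
      simp only
      rw [this]
      linarith [hm₀ z hz1]
    · -- interior : contradiction with the strict superharmonicity
      exfalso
      set s' := {y : EuclideanSpace ℝ (Fin n) | δ < ‖y‖ ∧ ‖y‖ < 1} with hs'_def
      have hs'open : IsOpen s' := by
        have : s' = norm ⁻¹' (Ioo δ 1) := rfl
        rw [this]
        exact isOpen_Ioo.preimage continuous_norm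
      have hzs' : z ∈ s' := ⟨hb1, hb2⟩
      have hKnhd : K ∈ 𝓝 z := Filter.mem_of_superset (hs'open.mem_nhds hzs')
        (fun y hy => (hKmem y).mpr ⟨hy.1.le, hy.2.le⟩)
      have hlocal : IsLocalMin φ z := hzmin.isLocalMin hKnhd
      have h0 : 0 ≤ laplacian φ z :=
        laplacian_nonneg_of_isLocalMin isOpen_compl_singleton hz0 hφcd hlocal
      -- compute the laplacian of φ at z
      have hlap : laplacian φ z = laplacian w z + laplacian F z :=
        laplacian_add isOpen_compl_singleton hz0 hwreg hFcd
      have hrad : laplacian F z = 4 * ‖z‖ ^ 2 * f'' (‖z‖ ^ 2) + 2 * n * f' (‖z‖ ^ 2) :=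
        laplacian_radial f f' f'' hd1 hd2 z hz0
      set q := ‖z‖ ^ 2 with hq_def
      have hq : (0 : ℝ) < q := by positivity
      set A := q⁻¹ with hA_def
      set B := q ^ (-(3 : ℝ) / 2) with hB_def
      have hA0 : 0 < A := inv_pos.mpr hq
      have hB0 : 0 ≤ B := Real.rpow_nonneg hq.le _
      have hqA : q * A = 1 := mul_inv_cancel₀ hq.ne'
      have e1 : q ^ (-(5 : ℝ) / 2) = A * B := by
        rw [hA_def, hB_def, ← Real.rpow_neg_one q, ← Real.rpow_add hq]
        norm_num
      have e2 : (q ^ 2)⁻¹ = A * A := by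
        rw [hA_def, sq, mul_inv]
      have hΔv : laplacian F z = ε * ((n : ℝ) - 2) * A + η * (3 - (n : ℝ)) * B := by
        rw [hrad]
        simp only [hf'_def, hf''_def]
        rw [e1, e2]
        linear_combination (-2 * ε * A + 3 * η * B) * hqA
      -- bound the laplacian of w
      have hwle : laplacian w z ≤ -(c * A) := by
        have h1 := hwineq z hz0 hb2.le
        have hra : (0 : ℝ) < ‖z‖ ^ a := Real.rpow_pos_of_pos hznorm a
        have h2 : c / ‖z‖ ^ a ≤ u z ^ p / ‖z‖ ^ a := by
          gcongr
          exact hcle z hb2.le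
        have h3 : ‖z‖ ^ a ≤ q := by
          have := Real.rpow_le_rpow_of_exponent_ge hznorm hb2.le ha2
          rwa [show ((2:ℝ) = ((2:ℕ):ℝ)) by norm_num, Real.rpow_natCast] at this
        have h4 : c * A ≤ c / ‖z‖ ^ a := by
          rw [hA_def, ← div_eq_mul_inv]
          gcongr
        have := le_trans h4 (le_trans h2 h1)
        linarith
      -- conclude negativity
      have hup : η * (3 - (n : ℝ)) * B ≤ 0 := by
        apply mul_nonpos_of_nonpos_of_nonneg ?_ hB0
        apply mul_nonpos_of_nonneg_of_nonpos hη0.le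
        linarith
      have hφneg : laplacian φ z ≤ -(c / 2) * A := by
        rw [hlap, hΔv]
        have hsw : ε * ((n : ℝ) - 2) * A = c / 2 * A := by rw [hεval]
        linarith [hwle, hup, hsw]
      have hApos : 0 < c / 2 * A := by positivity
      linarith [h0, hφneg, hApos]
  -- evaluate at the test point and conclude
  have h1 : φ z ≤ φ xt := hzmin hxtK
  have h2 : φ xt = w xt + (ε * Real.log t + η * t⁻¹) := by
    rw [hφ_def]
    simp only
    rw [hF_def, hf_def]
    simp only
    rw [hxtnorm]
    rw [radial_eval ε η ht0]
  have h3 : η * t⁻¹ ≤ 1 := by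
    rw [← div_eq_mul_inv]
    exact (div_le_one ht0).mpr hηt
  have h4 : w xt ≤ M := hM xt (by rw [hxtnorm]; linarith)
  have h5 : m₀ ≤ w xt + (ε * Real.log t + η * t⁻¹) := h2 ▸ le_trans hkey h1
  linarith [hlogt, h3, h4, h5]
end
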